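/- Let B be a simple bipartite graph with bipartition V(B) = W ⊎ U, G its half-square, D = (T, β_D) a nice tree decomposition of B, and D' = (T, β_{D'}) the derived decomposition of G. Enumerate U = {s_1, …, s_ℓ}, let K_i = N_B(s_i), and for i ∈ {1, …, ℓ} set Z_i = ⋃_{j ≤ i} K_j and F_i = ⋃_{j ≤ i} E(K_j). Then for every cycle S in G and every i ∈ {1, …, ℓ}, there is a cycle S_i in G with V(S_i) = V(S) such that E(S_i) ∖ F_i = E(S) ∖ F_i, and for every node t of T, the number of edges of E(S_i) ∩ F_i with one endpoint in Fake(t) ∩ Z_i and the other endpoint in V(G) ∖ γ_{D'}(t) is at most 4·|β_D(t) ∩ {s_1, …, s_i}|. -/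

import Mathlib

open SimpleGraph

section Defs

variable {V : Type*} {ι : Type*}

/-- `W, U` is a bipartition of the simple graph `B`. -/
def IsBipartition (B : SimpleGraph V) (W U : Set V) : Prop :=
  (∀ v, v ∈ W ∨ v ∈ U) ∧ (∀ v, ¬(v ∈ W ∧ v ∈ U)) ∧
    ∀ ⦃a b⦄, B.Adj a b → (a ∈ W ∧ b ∈ U) ∨ (a ∈ U ∧ b ∈ W)

/-- The half-square of `B` on side `W`: two distinct vertices of `W` are adjacent
iff they have a common neighbor in `B`. -/
def halfSquare (B : SimpleGraph V) (W : Set V) : SimpleGraph V where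
  Adj a b := a ≠ b ∧ a ∈ W ∧ b ∈ W ∧ ∃ s, B.Adj a s ∧ B.Adj b s
  symm := by
    constructor
    rintro a b ⟨hne, ha, hb, s, h1, h2⟩
    exact ⟨hne.symm, hb, ha, s, h2, h1⟩
  loopless := by constructor; rintro a ⟨hne, _⟩; exact hne rfl

/-- Tree decomposition of the graph `H` with vertex set `S`, over the tree `T`. -/
structure IsTreeDecompOn (H : SimpleGraph V) (S : Set V) (T : SimpleGraph ι)
    (β : ι → Set V) : Prop where
  covers : ∀ v ∈ S, ∃ t, v ∈ β t
  edge_mem : ∀ ⦃u v⦄, H.Adj u v → ∃ t, u ∈ β t ∧ v ∈ β t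
  conn : ∀ v ∈ S, (T.induce {t | v ∈ β t}).Connected

/-- `t'` is a descendant of `t` (inclusively) in the tree `T` rooted at `r`:
`t` lies on every path from `t'` to the root. -/
def Desc (T : SimpleGraph ι) (r : ι) (t t' : ι) : Prop :=
  ∀ p : T.Walk t' r, p.IsPath → t ∈ p.support

/-- `γ(t)`: union of the bags of `t` and of all its descendants. -/
def gammaSet (T : SimpleGraph ι) (r : ι) (β : ι → Set V) (t : ι) : Set V :=
  ⋃ t' ∈ {t' | Desc T r t t'}, β t'

/-- The bag of the derived decomposition. -/
def derivedBag (B : SimpleGraph V) (W U : Set V) (T : SimpleGraph ι) (r : ι)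
    (β : ι → Set V) (t : ι) : Set V :=
  (β t ∩ W) ∪ ⋃ s ∈ β t ∩ U, B.neighborSet s ∩ gammaSet T r β t

def originalSet (B : SimpleGraph V) (W U : Set V) (T : SimpleGraph ι) (r : ι)
    (β : ι → Set V) (t : ι) : Set V :=
  β t ∩ derivedBag B W U T r β t

def fakeSet (B : SimpleGraph V) (W U : Set V) (T : SimpleGraph ι) (r : ι)
    (β : ι → Set V) (t : ι) : Set V :=
  derivedBag B W U T r β t \ β t

def cliquesAt (B : SimpleGraph V) (U : Set V) (β : ι → Set V) (t : ι) : Set (Set V) :=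
  {K | ∃ s ∈ β t ∩ U, K = B.neighborSet s}

def IsChild (T : SimpleGraph ι) (r : ι) (t t' : ι) : Prop :=
  T.Adj t t' ∧ Desc T r t t'

def IsLeafNode (T : SimpleGraph ι) (r : ι) (β : ι → Set V) (t : ι) : Prop :=
  (∀ t', ¬ IsChild T r t t') ∧ β t = ∅

def IsForgetNode (T : SimpleGraph ι) (r : ι) (β : ι → Set V) (w : V) (t : ι) : Prop :=
  ∃ t', IsChild T r t t' ∧ (∀ t'', IsChild T r t t'' → t'' = t') ∧
    w ∈ β t' ∧ β t = β t' \ {w}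

def IsIntroduceNode (T : SimpleGraph ι) (r : ι) (β : ι → Set V) (w : V) (t : ι) : Prop :=
  ∃ t', IsChild T r t t' ∧ (∀ t'', IsChild T r t t'' → t'' = t') ∧
    w ∈ β t ∧ β t \ {w} = β t'

def IsJoinNode (T : SimpleGraph ι) (r : ι) (β : ι → Set V) (t : ι) : Prop :=
  ∃ t₁ t₂, t₁ ≠ t₂ ∧ IsChild T r t t₁ ∧ IsChild T r t t₂ ∧
    (∀ t'', IsChild T r t t'' → t'' = t₁ ∨ t'' = t₂) ∧ β t = β t₁ ∧ β t = β t₂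

/-- A nice (rooted) tree decomposition. -/
def IsNice (T : SimpleGraph ι) (r : ι) (β : ι → Set V) : Prop :=
  β r = ∅ ∧ ∀ t, IsLeafNode T r β t ∨ (∃ w, IsForgetNode T r β w t) ∨
    (∃ w, IsIntroduceNode T r β w t) ∨ IsJoinNode T r β t

/-- `E(X)`: edges of `G` with both endpoints in `X`. -/
def edgesIn (G : SimpleGraph V) (X : Set V) : Set (Sym2 V) :=
  {e | e ∈ G.edgeSet ∧ ∀ x ∈ e, x ∈ X}

end Defs

open Classical in
/-- binary key of a list of sets -/
noncomputable def keyFn {α : Type*} : List (Set α) → α → ℕ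
  | [], _ => 0
  | D :: l, v => (if v ∈ D then 2 ^ l.length else 0) + keyFn l v

lemma keyFn_lt {α : Type*} (l : List (Set α)) (v : α) : keyFn l v < 2 ^ l.length := by
  induction l with
  | nil => simp [keyFn]
  | cons D l ih =>
    simp only [keyFn, List.length_cons, pow_succ]
    split <;> omega

lemma keyFn_convex {α : Type*} (l : List (Set α))
    (hl : l.Pairwise (fun A B => (A ∩ B).Nonempty → B ⊆ A)) (Dk : Set α) (hDk : Dk ∈ l)
    (a b c : α) (ha : a ∈ Dk) (hc : c ∈ Dk)
    (hab : keyFn l a ≤ keyFn l b) (hbc : keyFn l b ≤ keyFn l c) : b ∈ Dk := by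
  induction l with
  | nil => simp at hDk
  | cons D l ih =>
    have hlt := keyFn_lt l a
    have hltb := keyFn_lt l b
    have hltc := keyFn_lt l c
    simp only [keyFn] at hab hbc
    rcases List.pairwise_cons.mp hl with ⟨hD, hl'⟩
    have hmono1 : a ∈ D → b ∈ D := by
      intro haD
      by_contra hbD
      simp only [if_pos haD, if_neg hbD, zero_add] at hab
      omega
    have hmono2 : b ∈ D → c ∈ D := by
      intro hbD
      by_contra hcD
      simp only [if_pos hbD, if_neg hcD, zero_add] at hbc
      omega
    rcases List.mem_cons.mp hDk with rfl | hDk'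
    · exact hmono1 ha
    · by_cases hcD : c ∈ D
      · have hsub : Dk ⊆ D := hD Dk hDk' ⟨c, hcD, hc⟩
        have haD : a ∈ D := hsub ha
        have hbD : b ∈ D := hmono1 haD
        simp only [if_pos haD, if_pos hbD, if_pos hcD, add_le_add_iff_left] at hab hbc
        exact ih hl' hDk' hab hbc
      · have hbD : b ∉ D := fun h => hcD (hmono2 h)
        have haD : a ∉ D := fun h => hbD (hmono1 h)
        simp only [if_neg haD, if_neg hbD, if_neg hcD, zero_add] at hab hbc
        exact ih hl' hDk' hab hbc

/-- Any finite laminar family on a fintype admits an injective position function making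
each member convex. -/
lemma exists_pos_of_laminar {V : Type*} [Fintype V] (𝒟 : Set (Set V))
    (hlam : ∀ A ∈ 𝒟, ∀ B ∈ 𝒟, (A ∩ B).Nonempty → A ⊆ B ∨ B ⊆ A) :
    ∃ pos : V → ℕ, Function.Injective pos ∧
      ∀ D ∈ 𝒟, ∀ a b c, a ∈ D → c ∈ D → pos a ≤ pos b → pos b ≤ pos c → b ∈ D := by
  classical
  have hfin : 𝒟.Finite := Set.toFinite _
  set l₀ : List (Set V) := hfin.toFinset.toList with hl₀
  set le : Set V → Set V → Bool := fun A B => decide (B.ncard ≤ A.ncard) with hle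
  set l : List (Set V) := l₀.mergeSort le with hldef
  have hsorted : l.Pairwise (fun A B => le A B = true) := by
    apply List.pairwise_mergeSort
    · intro a b c hab hbc
      simp only [hle, decide_eq_true_eq] at *
      omega
    · intro a b
      simp only [hle, Bool.or_eq_true, decide_eq_true_eq]
      omega
  have hmem : ∀ A ∈ 𝒟, A ∈ l := by
    intro A hA
    rw [hldef, List.mem_mergeSort, hl₀, Finset.mem_toList, Set.Finite.mem_toFinset]
    exact hA
  have hmem' : ∀ A ∈ l, A ∈ 𝒟 := by
    intro A hA
    rw [hldef, List.mem_mergeSort, hl₀, Finset.mem_toList, Set.Finite.mem_toFinset] at hA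
    exact hA
  have hpair : l.Pairwise (fun A B => (A ∩ B).Nonempty → B ⊆ A) := by
    refine hsorted.imp_of_mem ?_
    intro A B hAl hBl hle' hne
    have hcard : B.ncard ≤ A.ncard := by simpa [hle] using hle'
    rcases hlam A (hmem' A hAl) B (hmem' B hBl) hne with h | h
    · rw [Set.eq_of_subset_of_ncard_le h hcard (Set.toFinite _)]
    · exact h
  set n : ℕ := Fintype.card V with hn
  set rk : V → ℕ := fun v => ((Fintype.equivFin V) v : ℕ) with hrk
  have hru : ∀ x, rk x < n + 1 := fun x => by
    simp only [hrk]; have := ((Fintype.equivFin V) x).isLt; omega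
  have key_le : ∀ x y, keyFn l x * (n + 1) + rk x ≤ keyFn l y * (n + 1) + rk y →
      keyFn l x ≤ keyFn l y := by
    intro x y h
    by_contra hxy
    push_neg at hxy
    have := hru x
    have := hru y
    nlinarith
  refine ⟨fun v => keyFn l v * (n + 1) + rk v, ?_, ?_⟩
  · intro u v huv
    simp only at huv
    have hkey : keyFn l u = keyFn l v :=
      le_antisymm (key_le u v huv.le) (key_le v u huv.ge)
    rw [hkey] at huv
    have : rk u = rk v := by omega
    exact (Fintype.equivFin V).injective (by ext : 1; simpa [hrk] using this)
  · intro D hD a b c ha hc hab hbc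
    exact keyFn_convex l hpair D (hmem D hD) a b c ha hc (key_le a b hab) (key_le b c hbc)
section TreeLemmas
variable {V : Type*} {ι : Type*} {T : SimpleGraph ι} {r : ι}

lemma desc_refl (T : SimpleGraph ι) (r t : ι) : Desc T r t t :=
  fun p _ => p.start_mem_support

/-- Separation: `t` lies on every walk from a descendant to a non-descendant. -/
lemma desc_sep {t x y : ι} (hx : Desc T r t x) (hy : ¬ Desc T r t y)
    (W : T.Walk x y) : t ∈ W.support := by
  classical
  rw [Desc] at hy
  push_neg at hy
  obtain ⟨q, hq, hqt⟩ := hy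
  have hb := (W.append q).bypass_isPath
  have := hx (W.append q).bypass hb
  have hsub := (W.append q).support_bypass_subset this
  rw [SimpleGraph.Walk.mem_support_append_iff] at hsub
  rcases hsub with h | h
  · exact h
  · exact absurd h hqt

lemma desc_antisymm (hT : T.IsTree) {t u : ι} (htu : Desc T r t u) (hut : Desc T r u t) :
    t = u := by
  classical
  obtain ⟨P, hP, -⟩ := hT.existsUnique_path u r
  have htP : t ∈ P.support := htu P hP
  have hQ : (P.dropUntil t htP).IsPath := hP.dropUntil htP
  have huQ : u ∈ (P.dropUntil t htP).support := hut _ hQ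
  have hspec := P.take_spec htP
  have hnd : P.support.Nodup := hP.support_nodup
  have hsupp : (P.takeUntil t htP).support ++ (P.dropUntil t htP).support.tail = P.support := by
    rw [← SimpleGraph.Walk.support_append, hspec]
  have huT : u ∈ (P.takeUntil t htP).support := (P.takeUntil t htP).start_mem_support
  rw [← hsupp] at hnd
  have hdisj := (List.nodup_append'.mp hnd).2.2
  rw [SimpleGraph.Walk.support_eq_cons] at huQ
  rcases List.mem_cons.mp huQ with h | h
  · exact h.symm
  · exact absurd h (fun hh => hdisj huT hh)

/-- In a tree, two nodes having a common descendant are comparable. -/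
lemma desc_comparable (hT : T.IsTree) {t u t₀ : ι} (ht : Desc T r t t₀) (hu : Desc T r u t₀) :
    (∀ y, Desc T r t y → Desc T r u y) ∨ (∀ y, Desc T r u y → Desc T r t y) := by
  classical
  obtain ⟨P, hP, -⟩ := hT.existsUnique_path t₀ r
  have htP : t ∈ P.support := ht P hP
  have huP : u ∈ P.support := hu P hP
  set Q := P.dropUntil t htP with hQdef
  have hQ : Q.IsPath := hP.dropUntil htP
  by_cases huQ : u ∈ Q.support
  · left
    intro y hy R hR
    have htR : t ∈ R.support := hy R hR
    have hR' : (R.dropUntil t htR).IsPath := hR.dropUntil htR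
    have : R.dropUntil t htR = Q := by
      obtain ⟨P₀, hP₀, huniq⟩ := hT.existsUnique_path t r
      rw [huniq _ hR', huniq _ hQ]
    exact R.support_dropUntil_subset htR (this ▸ huQ)
  · right
    -- u is in the part before t
    have hspec := P.take_spec htP
    set A := P.takeUntil t htP with hAdef
    have huA : u ∈ A.support := by
      have : u ∈ A.support ∨ u ∈ Q.support := by
        rw [← SimpleGraph.Walk.mem_support_append_iff, hspec]; exact huP
      tauto
    have hA : A.IsPath := hP.takeUntil htP
    set B := A.dropUntil u huA with hBdef
    have hB : B.IsPath := hA.dropUntil huA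
    -- W : path from u to r through t
    set W := B.append Q with hWdef
    have hPnd : P.support.Nodup := hP.support_nodup
    have hsuppP : A.support ++ Q.support.tail = P.support := by
      rw [← SimpleGraph.Walk.support_append, hspec]
    have hWpath : W.IsPath := by
      rw [SimpleGraph.Walk.isPath_def, hWdef, SimpleGraph.Walk.support_append]
      rw [← hsuppP] at hPnd
      rcases List.nodup_append'.mp hPnd with ⟨hA1, hQ1, hdisj⟩
      refine List.nodup_append'.mpr ⟨hB.support_nodup, hQ1, ?_⟩
      intro z hz
      exact hdisj (A.support_dropUntil_subset huA hz)
    have htW : t ∈ W.support := by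
      rw [hWdef, SimpleGraph.Walk.mem_support_append_iff]
      left
      exact B.end_mem_support
    intro y hy R hR
    have huR : u ∈ R.support := hy R hR
    have hR' : (R.dropUntil u huR).IsPath := hR.dropUntil huR
    have : R.dropUntil u huR = W := by
      obtain ⟨P₀, hP₀, huniq⟩ := hT.existsUnique_path u r
      rw [huniq _ hR', huniq _ hWpath]
    exact R.support_dropUntil_subset huR (this ▸ htW)

end TreeLemmas
section DSetLemmas

variable {V : Type*} {ι : Type*}

/-- The set of vertices appearing only in bags strictly below `t`. -/
def DSet (T : SimpleGraph ι) (r : ι) (β : ι → Set V) (t : ι) : Set V :=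
  {v | ∀ t'', v ∈ β t'' → Desc T r t t'' ∧ t'' ≠ t}

variable {B : SimpleGraph V} {W U : Set V} {T : SimpleGraph ι} {r : ι} {β : ι → Set V}

lemma mem_bag_of_sep (hD : IsTreeDecompOn B Set.univ T β) {v : V} {t t₁ t₂ : ι}
    (h₁ : v ∈ β t₁) (h₂ : v ∈ β t₂) (hd : Desc T r t t₁) (hnd : ¬ Desc T r t t₂) :
    v ∈ β t := by
  have hconn := hD.conn v (Set.mem_univ v)
  obtain ⟨wlk⟩ := hconn.preconnected ⟨t₁, h₁⟩ ⟨t₂, h₂⟩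
  have htW : t ∈ (wlk.map
      (SimpleGraph.Embedding.induce (G := T) {t' | v ∈ β t'}).toHom).support :=
    desc_sep hd hnd _
  rw [SimpleGraph.Walk.support_map] at htW
  obtain ⟨t', ht', hval⟩ := List.mem_map.mp htW
  have hv : v ∈ β (t' : ι) := t'.2
  have heq : (t' : ι) = t := hval
  rwa [heq] at hv

lemma mem_gammaSet {β' : ι → Set V} {t t₁ : ι} {v : V} (hd : Desc T r t t₁)
    (hv : v ∈ β' t₁) : v ∈ gammaSet T r β' t := by
  rw [gammaSet]
  exact Set.mem_biUnion hd hv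

lemma fake_subset_DSet (hD : IsTreeDecompOn B Set.univ T β) (t : ι) :
    fakeSet B W U T r β t ⊆ DSet T r β t := by
  rintro p ⟨hpd, hpt⟩
  rcases hpd with hl | hr
  · exact absurd hl.1 hpt
  · rw [Set.mem_iUnion₂] at hr
    obtain ⟨s, hs, hpN, hpγ⟩ := hr
    rw [gammaSet, Set.mem_iUnion₂] at hpγ
    obtain ⟨t₁, hdesc, hpβ⟩ := hpγ
    intro t'' hpt''
    constructor
    · by_contra hnd
      exact hpt (mem_bag_of_sep hD hpβ hpt'' hdesc hnd)
    · rintro rfl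
      exact hpt hpt''

lemma not_mem_DSet (hD : IsTreeDecompOn B Set.univ T β) {t : ι} {q : V} (hqW : q ∈ W)
    (hq : q ∉ gammaSet T r (derivedBag B W U T r β) t) : q ∉ DSet T r β t := by
  intro hqin
  obtain ⟨t₁, hqβ⟩ := hD.covers q (Set.mem_univ q)
  have hd := (hqin t₁ hqβ).1
  exact hq (mem_gammaSet hd (Or.inl ⟨hqβ, hqW⟩))

lemma owner_mem_bag (hD : IsTreeDecompOn B Set.univ T β) {t : ι} {p q s : V}
    (hp : p ∈ DSet T r β t) (hqW : q ∈ W)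
    (hq : q ∉ gammaSet T r (derivedBag B W U T r β) t)
    (hps : B.Adj p s) (hqs : B.Adj q s) : s ∈ β t := by
  obtain ⟨t₁, hp₁, hs₁⟩ := hD.edge_mem hps
  obtain ⟨t₂, hq₂, hs₂⟩ := hD.edge_mem hqs
  have hd₁ := (hp t₁ hp₁).1
  have hnd₂ : ¬ Desc T r t t₂ := by
    intro hd₂
    exact hq (mem_gammaSet hd₂ (Or.inl ⟨hq₂, hqW⟩))
  exact mem_bag_of_sep hD hs₁ hs₂ hd₁ hnd₂

lemma DSet_laminar (hD : IsTreeDecompOn B Set.univ T β) (hT : T.IsTree) (t u : ι)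
    (hne : (DSet T r β t ∩ DSet T r β u).Nonempty) :
    DSet T r β t ⊆ DSet T r β u ∨ DSet T r β u ⊆ DSet T r β t := by
  obtain ⟨v₀, hv₀t, hv₀u⟩ := hne
  obtain ⟨t₀, hv₀β⟩ := hD.covers v₀ (Set.mem_univ v₀)
  obtain ⟨hdt, hnet⟩ := hv₀t t₀ hv₀β
  obtain ⟨hdu, hneu⟩ := hv₀u t₀ hv₀β
  have key : ∀ t' u' : ι, (∀ y, Desc T r t' y → Desc T r u' y) →
      DSet T r β t' ⊆ DSet T r β u' := by
    intro t' u' hle v hv t'' hvβ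
    obtain ⟨hd, hne'⟩ := hv t'' hvβ
    refine ⟨hle _ hd, ?_⟩
    rintro rfl
    have h1 : Desc T r t'' t' := hle _ (desc_refl T r t')
    exact hne' (desc_antisymm hT h1 hd)
  rcases desc_comparable hT hdt hdu with h | h
  · exact Or.inl (key t u h)
  · exact Or.inr (key u t h)

end DSetLemmas
section Swap

variable {V : Type*} {G : SimpleGraph V}

lemma getLast_not_mem_dropLast {α : Type*} (l : List α) (h : l ≠ []) (hnd : l.Nodup) :
    l.getLast h ∉ l.dropLast := by
  intro hmem
  have hspec := List.dropLast_append_getLast h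
  rw [← hspec] at hnd
  rcases List.nodup_append'.mp hnd with ⟨-, -, hdisj⟩
  exact hdisj hmem (List.mem_singleton_self _)

lemma mem_tail_of_closed {w : V} (C : G.Walk w w) (hlen : 0 < C.length) :
    w ∈ C.support.tail := by
  have h2 := C.length_support
  have h3 := C.support_eq_cons
  have h1 : C.support.tail ≠ [] := by
    intro h
    have h5 : C.support.length = 1 := by rw [h3, h]; rfl
    rw [h2] at h5
    omega
  have h4 : C.support.tail.getLast h1 = w := by
    rw [List.getLast_tail]
    exact C.getLast_support
  have h6 := List.getLast_mem h1
  rwa [h4] at h6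

lemma mem_support_iff_mem_tail {w : V} (C : G.Walk w w) (hlen : 0 < C.length) (x : V) :
    x ∈ C.support ↔ x ∈ C.support.tail := by
  constructor
  · intro hx
    have h3 := C.support_eq_cons
    rw [h3, List.mem_cons] at hx
    rcases hx with rfl | hx
    · exact mem_tail_of_closed C hlen
    · exact hx
  · intro hx
    have h3 := C.support_eq_cons
    rw [h3]
    exact List.mem_cons_of_mem _ hx

/-- The 2-swap surgery on a cycle: replace darts `a→b` and `c→d` (with `a,b,c,d`
pairwise distinct) by edges `ac` and `bd`, obtaining a new cycle through the same
vertices. -/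
lemma cycle_swap [DecidableEq V] {w a b c d : V} {C : G.Walk w w} (hC : C.IsCycle)
    (hab : G.Adj a b) (hcd : G.Adj c d)
    (h₁ : (⟨(a, b), hab⟩ : G.Dart) ∈ C.darts) (h₂ : (⟨(c, d), hcd⟩ : G.Dart) ∈ C.darts)
    (hac : a ≠ c) (hbd : b ≠ d) (had : a ≠ d) (hbc : b ≠ c)
    (hAC : G.Adj a c) (hBD : G.Adj b d) :
    ∃ C' : G.Walk a a, C'.IsCycle ∧
      (∀ x, x ∈ C'.support ↔ x ∈ C.support) ∧
      (C'.edges : Multiset (Sym2 V)) + {s(a, b), s(c, d)}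
        = (C.edges : Multiset (Sym2 V)) + {s(a, c), s(b, d)} := by
  classical
  have hlen : 0 < C.length := by have := hC.three_le_length; omega
  have haC : a ∈ C.support := C.dart_fst_mem_support_of_mem_darts h₁
  have hwtail : w ∈ C.support.tail := mem_tail_of_closed C hlen
  set Ca := C.rotate a haC with hCadef
  have hCaC : Ca.IsCycle := hC.rotate haC
  have hdartsR : Ca.darts ~r C.darts := C.rotate_darts a haC
  have hedgesR : Ca.edges ~r C.edges := C.rotate_edges a haC
  have hsuppR : Ca.support.tail ~r C.support.tail := C.support_rotate a haC
  have h₁' : (⟨(a, b), hab⟩ : G.Dart) ∈ Ca.darts := hdartsR.mem_iff.mpr h₁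
  have h₂' : (⟨(c, d), hcd⟩ : G.Dart) ∈ Ca.darts := hdartsR.mem_iff.mpr h₂
  have hlenCa : 0 < Ca.length := by have := hCaC.three_le_length; omega
  clear_value Ca
  clear hCadef
  -- it suffices to prove everything relative to `Ca`
  suffices h : ∃ C' : G.Walk a a, C'.IsCycle ∧
      (∀ x, x ∈ C'.support ↔ x ∈ Ca.support) ∧
      (C'.edges : Multiset (Sym2 V)) + {s(a, b), s(c, d)}
        = (Ca.edges : Multiset (Sym2 V)) + {s(a, c), s(b, d)} by
    obtain ⟨C', h1, h2, h3⟩ := h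
    refine ⟨C', h1, ?_, ?_⟩
    · intro x
      rw [h2 x, mem_support_iff_mem_tail Ca hlenCa x, mem_support_iff_mem_tail C hlen x]
      exact hsuppR.perm.mem_iff
    · rw [h3]
      congr 1
      exact Multiset.coe_eq_coe.mpr hedgesR.perm
  cases Ca with
  | nil => simp at h₁'
  | cons h₀ C₁ =>
    rename_i x
    have hnd1 : C₁.support.Nodup := by
      have := hCaC.support_nodup
      rwa [SimpleGraph.Walk.support_cons, List.tail_cons] at this
    -- first dart is (a, b), so x = b
    obtain rfl : b = x := by
      rw [SimpleGraph.Walk.darts_cons] at h₁'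
      rcases List.mem_cons.mp h₁' with heq | hmem
      · have := congrArg (fun dd : G.Dart => dd.toProd.2) heq
        simpa using this
      · exfalso
        have hfst : a ∈ C₁.support.dropLast := by
          have := List.mem_map_of_mem (f := fun dd : G.Dart => dd.toProd.1) hmem
          rwa [SimpleGraph.Walk.map_fst_darts] at this
        have hgl : C₁.support.getLast C₁.support_ne_nil = a := C₁.getLast_support
        have := getLast_not_mem_dropLast C₁.support C₁.support_ne_nil hnd1
        rw [hgl] at this
        exact this hfst
    -- d₂ is in C₁
    have hd₂1 : (⟨(c, d), hcd⟩ : G.Dart) ∈ C₁.darts := by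
      rw [SimpleGraph.Walk.darts_cons] at h₂'
      rcases List.mem_cons.mp h₂' with heq | hmem
      · exfalso
        have := congrArg (fun dd : G.Dart => dd.toProd.1) heq
        simp at this
        exact hac this.symm
      · exact hmem
    have hcC₁ : c ∈ C₁.support := C₁.dart_fst_mem_support_of_mem_darts hd₂1
    set P := C₁.takeUntil c hcC₁ with hPdef
    set C₂ := C₁.dropUntil c hcC₁ with hC₂def
    have hspec : P.append C₂ = C₁ := C₁.take_spec hcC₁
    have hsupp1 : P.support ++ C₂.support.tail = C₁.support := by
      rw [← SimpleGraph.Walk.support_append, hspec]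
    have hd₂2 : (⟨(c, d), hcd⟩ : G.Dart) ∈ C₂.darts := by
      have hmem : (⟨(c, d), hcd⟩ : G.Dart) ∈ P.darts ∨ (⟨(c, d), hcd⟩ : G.Dart) ∈ C₂.darts := by
        rw [← List.mem_append, ← SimpleGraph.Walk.darts_append, hspec]
        exact hd₂1
      rcases hmem with hmem | hmem
      · exfalso
        have hndP : P.support.Nodup := by
          rw [← hsupp1] at hnd1
          exact (List.nodup_append'.mp hnd1).1
        have hfst : c ∈ P.support.dropLast := by
          have := List.mem_map_of_mem (f := fun dd : G.Dart => dd.toProd.1) hmem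
          rwa [SimpleGraph.Walk.map_fst_darts] at this
        have hgl : P.support.getLast P.support_ne_nil = c := P.getLast_support
        have := getLast_not_mem_dropLast P.support P.support_ne_nil hndP
        rw [hgl] at this
        exact this hfst
      · exact hmem
    clear_value C₂
    clear hC₂def
    cases C₂ with
    | nil => exact (hac rfl).elim
    | cons h₁'' C₃ =>
      rename_i y
      -- supports
      have hPC3 : P.support ++ C₃.support = C₁.support := by
        rw [← hsupp1, SimpleGraph.Walk.support_cons, List.tail_cons]
      have hndsplit := hPC3 ▸ hnd1
      rcases List.nodup_append'.mp hndsplit with ⟨hndP, hndC₃, hdisj⟩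
      have hbP : b ∈ P.support := P.start_mem_support
      have hcP : c ∈ P.support := P.end_mem_support
      have haC₃ : a ∈ C₃.support := C₃.end_mem_support
      have hcC₃ : c ∉ C₃.support := fun h => hdisj hcP h
      -- y = d
      obtain rfl : d = y := by
        rw [SimpleGraph.Walk.darts_cons] at hd₂2
        rcases List.mem_cons.mp hd₂2 with heq | hmem
        · have := congrArg (fun dd : G.Dart => dd.toProd.2) heq
          simpa using this
        · exfalso
          have hfst : c ∈ C₃.support.dropLast := by
            have := List.mem_map_of_mem (f := fun dd : G.Dart => dd.toProd.1) hmem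
            rwa [SimpleGraph.Walk.map_fst_darts] at this
          exact hcC₃ (List.Sublist.mem hfst (List.dropLast_sublist C₃.support))
      have hdC₃ : d ∈ C₃.support := C₃.start_mem_support
      have haP : a ∉ P.support := fun h => hdisj h haC₃
      have hdP : d ∉ P.support := fun h => hdisj h hdC₃
      have hbC₃ : b ∉ C₃.support := fun h => hdisj hbP h
      -- edge lists
      have hCaE : (SimpleGraph.Walk.cons h₀ C₁).edges
          = s(a, b) :: (P.edges ++ (s(c, d) :: C₃.edges)) := by
        rw [SimpleGraph.Walk.edges_cons, ← hspec, SimpleGraph.Walk.edges_append,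
          SimpleGraph.Walk.edges_cons]
      have hEnodup := hCaC.isCircuit.isTrail.edges_nodup
      rw [hCaE] at hEnodup
      rcases List.nodup_cons.mp hEnodup with ⟨habmem, hEnodup'⟩
      rcases List.nodup_append'.mp hEnodup' with ⟨hndPE, hndcons, hdisjE⟩
      rcases List.nodup_cons.mp hndcons with ⟨hcdC₃, hndC₃E⟩
      -- edge membership facts
      have hbdP : s(b, d) ∉ P.edges := fun h => hdP (P.snd_mem_support_of_mem_edges h)
      have hbdC₃ : s(b, d) ∉ C₃.edges := fun h => hbC₃ (C₃.fst_mem_support_of_mem_edges h)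
      have hacP : s(a, c) ∉ P.edges := fun h => haP (P.fst_mem_support_of_mem_edges h)
      have hacC₃ : s(a, c) ∉ C₃.edges := fun h => hcC₃ (C₃.snd_mem_support_of_mem_edges h)
      have hacbd : s(a, c) ≠ s(b, d) := by
        intro h
        rcases Sym2.eq_iff.mp h with ⟨h1, h2⟩ | ⟨h1, h2⟩
        · exact hab.ne h1
        · exact had h1
      -- the new cycle
      refine ⟨SimpleGraph.Walk.cons hAC (P.reverse.append (SimpleGraph.Walk.cons hBD C₃)),
        ?_, ?_, ?_⟩
      · -- IsCycle
        have hsupp' : (SimpleGraph.Walk.cons hAC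
            (P.reverse.append (SimpleGraph.Walk.cons hBD C₃))).support
            = a :: (P.support.reverse ++ C₃.support) := by
          rw [SimpleGraph.Walk.support_cons, SimpleGraph.Walk.support_append,
            SimpleGraph.Walk.support_reverse, SimpleGraph.Walk.support_cons, List.tail_cons]
        have hedges' : (SimpleGraph.Walk.cons hAC
            (P.reverse.append (SimpleGraph.Walk.cons hBD C₃))).edges
            = s(a, c) :: (P.edges.reverse ++ (s(b, d) :: C₃.edges)) := by
          rw [SimpleGraph.Walk.edges_cons, SimpleGraph.Walk.edges_append,
            SimpleGraph.Walk.edges_reverse, SimpleGraph.Walk.edges_cons]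
        refine ⟨⟨⟨?_⟩, by simp⟩, ?_⟩
        · -- trail
          rw [hedges']
          refine List.nodup_cons.mpr ⟨?_, ?_⟩
          · intro hmem
            rcases List.mem_append.mp hmem with h | h
            · exact hacP (List.mem_reverse.mp h)
            · rcases List.mem_cons.mp h with h | h
              · exact hacbd h
              · exact hacC₃ h
          · refine List.nodup_append'.mpr ⟨List.nodup_reverse.mpr hndPE, ?_, ?_⟩
            · exact List.nodup_cons.mpr ⟨hbdC₃, hndC₃E⟩
            · intro e he hmem
              have heP : e ∈ P.edges := List.mem_reverse.mp he
              rcases List.mem_cons.mp hmem with rfl | h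
              · exact hbdP heP
              · exact hdisjE heP (List.mem_cons_of_mem _ h)
        · -- support tail nodup
          rw [hsupp', List.tail_cons]
          refine List.nodup_append'.mpr ⟨List.nodup_reverse.mpr hndP, hndC₃, ?_⟩
          intro z hz
          exact hdisj (List.mem_reverse.mp hz)
      · -- same support
        intro z
        rw [SimpleGraph.Walk.support_cons, SimpleGraph.Walk.support_append,
          SimpleGraph.Walk.support_reverse, SimpleGraph.Walk.support_cons, List.tail_cons,
          SimpleGraph.Walk.support_cons, ← hPC3]
        simp only [List.mem_cons, List.mem_append, List.mem_reverse]
      · -- multiset identity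
        have hE1 : (SimpleGraph.Walk.cons hAC
            (P.reverse.append (SimpleGraph.Walk.cons hBD C₃))).edges
            = s(a, c) :: (P.edges.reverse ++ (s(b, d) :: C₃.edges)) := by
          rw [SimpleGraph.Walk.edges_cons, SimpleGraph.Walk.edges_append,
            SimpleGraph.Walk.edges_reverse, SimpleGraph.Walk.edges_cons]
        rw [hE1, hCaE]
        have : (P.edges.reverse : Multiset (Sym2 V)) = (P.edges : Multiset (Sym2 V)) :=
          Multiset.coe_reverse _
        simp only [← Multiset.cons_coe, ← Multiset.coe_add] at *
        rw [this]
        simp only [Multiset.insert_eq_cons, ← Multiset.singleton_add]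
        abel
end Swap
section Extra

variable {V : Type*} {G : SimpleGraph V}

lemma cycle_support_dropLast_nodup {w : V} {C : G.Walk w w} (hC : C.IsCycle) :
    C.support.dropLast.Nodup := by
  have hlen : 0 < C.length := by have := hC.three_le_length; omega
  have h3 := C.support_eq_cons
  have htne : C.support.tail ≠ [] := by
    intro h
    have h5 : C.support.length = 1 := by rw [h3, h]; rfl
    rw [C.length_support] at h5
    omega
  have hnd := hC.support_nodup
  have hw : C.support.tail.getLast htne = w := by
    rw [List.getLast_tail]
    exact C.getLast_support
  rw [h3, List.dropLast_cons_of_ne_nil htne]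
  refine List.nodup_cons.mpr ⟨?_, List.Nodup.sublist (List.dropLast_sublist _) hnd⟩
  intro hmem
  have := getLast_not_mem_dropLast C.support.tail htne hnd
  rw [hw] at this
  exact this hmem

lemma cycle_darts_fst_inj {w : V} {C : G.Walk w w} (hC : C.IsCycle)
    {d₁ d₂ : G.Dart} (h₁ : d₁ ∈ C.darts) (h₂ : d₂ ∈ C.darts)
    (h : d₁.toProd.1 = d₂.toProd.1) : d₁ = d₂ := by
  have hnd : (C.darts.map (fun dd : G.Dart => dd.toProd.1)).Nodup := by
    rw [SimpleGraph.Walk.map_fst_darts]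
    exact cycle_support_dropLast_nodup hC
  exact List.inj_on_of_nodup_map hnd h₁ h₂ h

lemma cycle_darts_snd_inj {w : V} {C : G.Walk w w} (hC : C.IsCycle)
    {d₁ d₂ : G.Dart} (h₁ : d₁ ∈ C.darts) (h₂ : d₂ ∈ C.darts)
    (h : d₁.toProd.2 = d₂.toProd.2) : d₁ = d₂ := by
  have hnd : (C.darts.map (fun dd : G.Dart => dd.toProd.2)).Nodup := by
    rw [SimpleGraph.Walk.map_snd_darts]
    exact hC.support_nodup
  exact List.inj_on_of_nodup_map hnd h₁ h₂ h

end Extra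


/-- iterated version over the special cliques `K_1, …, K_ℓ`. For
every cycle `S` and every `i`, there is a cycle `S_i` on the same vertex set,
agreeing with `S` outside `F_i = ⋃_{j ≤ i} E(K_j)`, such that for every node `t`
the number of edges of `E(S_i) ∩ F_i` with one endpoint in `Fake(t) ∩ Z_i` and
the other in `V(G) ∖ γ_{D'}(t)` is at most `4·|β_D(t) ∩ {s_1, …, s_i}|`. -/
theorem stmt_10 {V : Type*} {ι : Type*} [Fintype V] (B : SimpleGraph V) (W U : Set V)
    (hbip : IsBipartition B W U)
    (T : SimpleGraph ι) (r : ι) (hT : T.IsTree) (β : ι → Set V)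
    (hD : IsTreeDecompOn B Set.univ T β) (hnice : IsNice T r β)
    (ℓ : ℕ) (sv : Fin ℓ → V) (hsv : Function.Injective sv) (hU : Set.range sv = U)
    (w : V) (S : (halfSquare B W).Walk w w) (hS : S.IsCycle) (i : Fin ℓ) :
    ∃ (w' : V) (S' : (halfSquare B W).Walk w' w'), S'.IsCycle ∧
      {x | x ∈ S'.support} = {x | x ∈ S.support} ∧
      {e | e ∈ S'.edges}
          \ (⋃ j ∈ {j : Fin ℓ | j ≤ i}, edgesIn (halfSquare B W) (B.neighborSet (sv j)))
        = {e | e ∈ S.edges}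
          \ (⋃ j ∈ {j : Fin ℓ | j ≤ i}, edgesIn (halfSquare B W) (B.neighborSet (sv j))) ∧
      ∀ t : ι,
        {e | e ∈ S'.edges ∧
          e ∈ (⋃ j ∈ {j : Fin ℓ | j ≤ i}, edgesIn (halfSquare B W) (B.neighborSet (sv j))) ∧
          ∃ p q, e = s(p, q) ∧
            p ∈ fakeSet B W U T r β t ∩ (⋃ j ∈ {j : Fin ℓ | j ≤ i}, B.neighborSet (sv j)) ∧
            q ∈ W \ gammaSet T r (derivedBag B W U T r β) t}.ncard
          ≤ 4 * (β t ∩ sv '' {j | j ≤ i}).ncard := by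
  classical
  -- a position function making all `DSet`s convex
  have hlam : ∀ A ∈ {A : Set V | ∃ t : ι, A = DSet T r β t},
      ∀ A' ∈ {A : Set V | ∃ t : ι, A = DSet T r β t},
      (A ∩ A').Nonempty → A ⊆ A' ∨ A' ⊆ A := by
    rintro A ⟨t, rfl⟩ A' ⟨u, rfl⟩ hne
    exact DSet_laminar hD hT t u hne
  obtain ⟨pos, hposinj, hposconv⟩ := exists_pos_of_laminar _ hlam
  have hposconv' : ∀ (t : ι) (a b c : V), a ∈ DSet T r β t → c ∈ DSet T r β t →
      pos a ≤ pos b → pos b ≤ pos c → b ∈ DSet T r β t := by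
    intro t a b c
    exact hposconv _ ⟨t, rfl⟩ a b c
  set len : Sym2 V → ℕ := Sym2.lift ⟨fun x y => ((pos x : ℤ) - pos y).natAbs,
    fun x y => by dsimp only; omega⟩ with hlendef
  have hlen : ∀ x y : V, len s(x, y) = ((pos x : ℤ) - pos y).natAbs := fun x y => rfl
  set F : Set (Sym2 V) := ⋃ j ∈ {j : Fin ℓ | j ≤ i},
      edgesIn (halfSquare B W) (B.neighborSet (sv j)) with hFdef
  -- minimize total length over valid reroutings
  have hPex : ∃ n, ∃ (w' : V) (C : (halfSquare B W).Walk w' w'), C.IsCycle ∧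
      (∀ x, x ∈ C.support ↔ x ∈ S.support) ∧
      ({e | e ∈ C.edges} \ F = {e | e ∈ S.edges} \ F) ∧
      ((C.edges.map len).sum = n) :=
    ⟨_, w, S, hS, fun _ => Iff.rfl, rfl, rfl⟩
  obtain ⟨w', S', hS'cyc, hS'supp, hS'F, hS'μ⟩ := Nat.find_spec hPex
  refine ⟨w', S', hS'cyc, Set.ext hS'supp, hS'F, ?_⟩
  intro t
  set D : Set V := DSet T r β t with hDdef
  set CntSet : Set (Sym2 V) := {e | e ∈ S'.edges ∧ e ∈ F ∧
      ∃ p q, e = s(p, q) ∧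
        p ∈ fakeSet B W U T r β t ∩ (⋃ j ∈ {j : Fin ℓ | j ≤ i}, B.neighborSet (sv j)) ∧
        q ∈ W \ gammaSet T r (derivedBag B W U T r β) t} with hCntdef
  show CntSet.ncard ≤ 4 * (β t ∩ sv '' {j | j ≤ i}).ncard
  -- structural facts about counted edges
  have hstruct : ∀ e ∈ CntSet, ∃ p q, e = s(p, q) ∧ p ∈ D ∧ q ∉ D ∧ q ∈ W ∧
      q ∉ gammaSet T r (derivedBag B W U T r β) t := by
    rintro e ⟨he1, he2, p, q, heq, hp, hq⟩
    refine ⟨p, q, heq, ?_, ?_, hq.1, hq.2⟩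
    · exact fake_subset_DSet hD t hp.1
    · exact not_mem_DSet hD hq.1 hq.2
  have hFmem : ∀ e ∈ CntSet, ∃ j : Fin ℓ, j ≤ i ∧
      e ∈ edgesIn (halfSquare B W) (B.neighborSet (sv j)) := by
    rintro e ⟨he1, he2, -⟩
    rw [hFdef] at he2
    simpa using he2
  have howner : ∀ e ∈ CntSet, ∀ j : Fin ℓ,
      e ∈ edgesIn (halfSquare B W) (B.neighborSet (sv j)) → sv j ∈ β t := by
    intro e he j hej
    obtain ⟨p, q, heq, hpD, hqD, hqW, hqγ⟩ := hstruct e he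
    have hpN : p ∈ B.neighborSet (sv j) := hej.2 p (by rw [heq]; simp)
    have hqN : q ∈ B.neighborSet (sv j) := hej.2 q (by rw [heq]; simp)
    exact owner_mem_bag hD hpD hqW hqγ
      ((B.mem_neighborSet _ _).mp hpN).symm ((B.mem_neighborSet _ _).mp hqN).symm
  -- finite counting setup
  have hCntfin : CntSet.Finite := Set.toFinite _
  have hCntcard : CntSet.ncard = hCntfin.toFinset.card := Set.ncard_eq_toFinset_card _ hCntfin
  set CntF : Finset (Sym2 V) := hCntfin.toFinset with hCntFdef
  set tset : Set V := β t ∩ sv '' {j | j ≤ i} with htsetdef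
  have htfin : tset.Finite := Set.toFinite _
  have htcard : tset.ncard = htfin.toFinset.card := Set.ncard_eq_toFinset_card _ htfin
  set tF : Finset V := htfin.toFinset with htFdef
  -- owner function
  set oFn : Sym2 V → V := fun e =>
    if h : ∃ j : Fin ℓ, j ≤ i ∧ e ∈ edgesIn (halfSquare B W) (B.neighborSet (sv j))
    then sv h.choose else w with hoFndef
  have hoFn : ∀ e ∈ CntSet, oFn e ∈ tset ∧
      e ∈ edgesIn (halfSquare B W) (B.neighborSet (oFn e)) ∧ oFn e ∈ U := by
    intro e he
    have hex := hFmem e he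
    have hoeq : oFn e = sv hex.choose := by rw [hoFndef]; simp only [dif_pos hex]
    obtain ⟨hle, hin⟩ := hex.choose_spec
    rw [hoeq]
    refine ⟨⟨howner e he _ hin, ⟨hex.choose, hle, rfl⟩⟩, hin, ?_⟩
    rw [← hU]; exact ⟨_, rfl⟩
  -- dart chooser
  obtain ⟨d₀, hd₀⟩ : ∃ d : (halfSquare B W).Dart, d ∈ S'.darts := by
    have h3 := hS'cyc.three_le_length
    have hne : S'.darts ≠ [] := by
      intro h
      have hl := S'.length_darts
      rw [h] at hl
      simp at hl
      omega
    exact List.exists_mem_of_ne_nil _ hne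
  set dFn : Sym2 V → (halfSquare B W).Dart := fun e =>
    if h : ∃ d : (halfSquare B W).Dart, d ∈ S'.darts ∧ d.edge = e then h.choose else d₀
    with hdFndef
  have hdFn : ∀ e ∈ S'.edges, dFn e ∈ S'.darts ∧ (dFn e).edge = e := by
    intro e he
    have he' : e ∈ S'.darts.map SimpleGraph.Dart.edge := he
    obtain ⟨d, hd, hde⟩ := List.mem_map.mp he'
    have hex : ∃ d : (halfSquare B W).Dart, d ∈ S'.darts ∧ d.edge = e := ⟨d, hd, hde⟩
    have : dFn e = hex.choose := by rw [hdFndef]; simp only [dif_pos hex]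
    rw [this]
    exact hex.choose_spec
  set dirFn : Sym2 V → Bool := fun e =>
    if (dFn e).toProd.1 ∈ D then true else false with hdirdef
  -- the central claim: each "side" contains at most 2k counted edges
  have inner : ∀ posA : V → ℕ, Function.Injective posA →
      (∀ a b c : V, a ∈ D → c ∈ D → posA a ≤ posA b → posA b ≤ posA c → b ∈ D) →
      (∀ x y : V, len s(x, y) = ((posA x : ℤ) - (posA y : ℤ)).natAbs) →
      (CntF.filter (fun e => ∃ p q, e = s(p, q) ∧ p ∈ D ∧ q ∉ D ∧ posA q < posA p)).card
        ≤ 2 * tF.card := by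
    intro posA hinjA hconvA hlenA
    by_contra hconL
    push_neg at hconL
    set LF := CntF.filter (fun e => ∃ p q, e = s(p, q) ∧ p ∈ D ∧ q ∉ D ∧ posA q < posA p)
      with hLFdef
    have unpack : ∀ e ∈ LF, ∃ p q, e = s(p, q) ∧ p ∈ D ∧ q ∉ D ∧ posA q < posA p ∧
        q ∈ W ∧ q ∉ gammaSet T r (derivedBag B W U T r β) t ∧ e ∈ CntSet := by
      intro e he
      rcases Finset.mem_filter.mp he with ⟨heCF, p, q, heq, hpD, hqD, hlt⟩
      have heC : e ∈ CntSet := hCntfin.mem_toFinset.mp heCF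
      obtain ⟨p₀, q₀, heq₀, hp₀D, hq₀D, hq₀W, hq₀γ⟩ := hstruct e heC
      have hpq : s(p₀, q₀) = s(p, q) := by rw [← heq₀, ← heq]
      rcases Sym2.eq_iff.mp hpq with ⟨hp', hq'⟩ | ⟨hp', hq'⟩
      · subst hp'; subst hq'
        exact ⟨p₀, q₀, heq, hpD, hqD, hlt, hq₀W, hq₀γ, heC⟩
      · exact absurd (hp' ▸ hp₀D) hqD
    -- pigeonhole on owners
    have hmaps : ∀ e ∈ LF, oFn e ∈ tF := by
      intro e he
      have heC : e ∈ CntSet := hCntfin.mem_toFinset.mp (Finset.mem_filter.mp he).1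
      exact htfin.mem_toFinset.mpr (hoFn e heC).1
    obtain ⟨y, hyT, hyfib⟩ := Finset.exists_lt_card_fiber_of_mul_lt_card_of_maps_to hmaps
      (by omega : tF.card * 2 < LF.card)
    set YF := LF.filter (fun e => oFn e = y) with hYFdef
    have hmaps2 : ∀ e ∈ YF, dirFn e ∈ (Finset.univ : Finset Bool) := fun e _ => Finset.mem_univ _
    obtain ⟨bb, -, hbbfib⟩ := Finset.exists_lt_card_fiber_of_mul_lt_card_of_maps_to hmaps2
      (by simpa using hyfib : (Finset.univ : Finset Bool).card * 1 < YF.card)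
    obtain ⟨e₁, he₁, e₂, he₂, hne⟩ := Finset.one_lt_card.mp hbbfib
    -- facts about y
    obtain ⟨hyβ, j₀, hj₀le, hj₀eq⟩ : y ∈ β t ∧ ∃ j₀ : Fin ℓ, j₀ ≤ i ∧ sv j₀ = y := by
      have := htfin.mem_toFinset.mp hyT
      rw [htsetdef] at this
      exact ⟨this.1, this.2.choose, this.2.choose_spec.1, this.2.choose_spec.2⟩
    have hyU : y ∈ U := by rw [← hU, ← hj₀eq]; exact ⟨_, rfl⟩
    have hNmem : ∀ e ∈ YF, ∀ x ∈ e, x ∈ B.neighborSet y := by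
      intro e he x hx
      rcases Finset.mem_filter.mp he with ⟨hLFe, hye⟩
      have heC : e ∈ CntSet := hCntfin.mem_toFinset.mp (Finset.mem_filter.mp hLFe).1
      have h2 := (hoFn e heC).2.1
      rw [hye] at h2
      exact h2.2 x hx
    have hWofN : ∀ x, x ∈ B.neighborSet y → x ∈ W := by
      intro x hx
      have hadj : B.Adj y x := hx
      rcases hbip.2.2 hadj with ⟨hyW, hxU⟩ | ⟨hyU', hxW⟩
      · exact absurd ⟨hyW, hyU⟩ (hbip.2.1 y)
      · exact hxW
    have hAdjN : ∀ x z, x ≠ z → x ∈ B.neighborSet y → z ∈ B.neighborSet y →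
        (halfSquare B W).Adj x z := by
      intro x z hxz hx hz
      exact ⟨hxz, hWofN x hx, hWofN z hz, y, ((B.mem_neighborSet _ _).mp hx).symm,
        ((B.mem_neighborSet _ _).mp hz).symm⟩
    -- unpack the two chosen edges
    have he₁YF : e₁ ∈ YF := (Finset.mem_filter.mp he₁).1
    have he₂YF : e₂ ∈ YF := (Finset.mem_filter.mp he₂).1
    have hdir₁ : dirFn e₁ = bb := (Finset.mem_filter.mp he₁).2
    have hdir₂ : dirFn e₂ = bb := (Finset.mem_filter.mp he₂).2
    have he₁LF : e₁ ∈ LF := (Finset.mem_filter.mp he₁YF).1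
    have he₂LF : e₂ ∈ LF := (Finset.mem_filter.mp he₂YF).1
    obtain ⟨p₁, q₁, heq₁, hp₁D, hq₁D, hlt₁, hq₁W, hq₁γ, he₁C⟩ := unpack e₁ he₁LF
    obtain ⟨p₂, q₂, heq₂, hp₂D, hq₂D, hlt₂, hq₂W, hq₂γ, he₂C⟩ := unpack e₂ he₂LF
    have he₁E : e₁ ∈ S'.edges := he₁C.1
    have he₂E : e₂ ∈ S'.edges := he₂C.1
    have he₁F : e₁ ∈ F := he₁C.2.1
    have he₂F : e₂ ∈ F := he₂C.2.1
    have hp₁N : p₁ ∈ B.neighborSet y := hNmem e₁ he₁YF p₁ (by rw [heq₁]; simp)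
    have hq₁N : q₁ ∈ B.neighborSet y := hNmem e₁ he₁YF q₁ (by rw [heq₁]; simp)
    have hp₂N : p₂ ∈ B.neighborSet y := hNmem e₂ he₂YF p₂ (by rw [heq₂]; simp)
    have hq₂N : q₂ ∈ B.neighborSet y := hNmem e₂ he₂YF q₂ (by rw [heq₂]; simp)
    -- darts
    obtain ⟨hd₁mem, hd₁edge⟩ := hdFn e₁ he₁E
    obtain ⟨hd₂mem, hd₂edge⟩ := hdFn e₂ he₂E
    have hdne : dFn e₁ ≠ dFn e₂ := by
      intro h
      apply hne
      rw [← hd₁edge, ← hd₂edge, h]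
    have hedge1 : s((dFn e₁).toProd.1, (dFn e₁).toProd.2) = s(p₁, q₁) :=
      hd₁edge.trans heq₁
    have hedge2 : s((dFn e₂).toProd.1, (dFn e₂).toProd.2) = s(p₂, q₂) :=
      hd₂edge.trans heq₂
    -- cross-side inequalities
    have hcross1 : posA q₁ < posA p₂ := by
      by_contra hcn
      push_neg at hcn
      exact hq₁D (hconvA p₂ q₁ p₁ hp₂D hp₁D hcn (le_of_lt hlt₁))
    have hcross2 : posA q₂ < posA p₁ := by
      by_contra hcn
      push_neg at hcn
      exact hq₂D (hconvA p₁ q₂ p₂ hp₁D hp₂D hcn (le_of_lt hlt₂))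

    have hmain : ∃ (v0 : V) (C'' : (halfSquare B W).Walk v0 v0), p₁ ≠ p₂ ∧ q₁ ≠ q₂ ∧
        C''.IsCycle ∧ (∀ x, x ∈ C''.support ↔ x ∈ S'.support) ∧
        (C''.edges : Multiset (Sym2 V)) + {e₁, e₂}
          = (S'.edges : Multiset (Sym2 V)) + {s(p₁, p₂), s(q₁, q₂)} := by
      cases bb with
      | true =>
        have hfst₁ : (dFn e₁).toProd.1 ∈ D := by
          by_contra hn
          rw [hdirdef] at hdir₁
          simp only [if_neg hn] at hdir₁
          exact Bool.noConfusion hdir₁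
        have hfst₂ : (dFn e₂).toProd.1 ∈ D := by
          by_contra hn
          rw [hdirdef] at hdir₂
          simp only [if_neg hn] at hdir₂
          exact Bool.noConfusion hdir₂
        obtain ⟨hf₁, hs₁⟩ : (dFn e₁).toProd.1 = p₁ ∧ (dFn e₁).toProd.2 = q₁ := by
          rcases Sym2.eq_iff.mp hedge1 with h | ⟨h1, h2⟩
          · exact h
          · exact absurd (h1 ▸ hfst₁) hq₁D
        obtain ⟨hf₂, hs₂⟩ : (dFn e₂).toProd.1 = p₂ ∧ (dFn e₂).toProd.2 = q₂ := by
          rcases Sym2.eq_iff.mp hedge2 with h | ⟨h1, h2⟩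
          · exact h
          · exact absurd (h1 ▸ hfst₂) hq₂D
        have hp₁p₂ : p₁ ≠ p₂ := by
          intro h
          exact hdne (cycle_darts_fst_inj hS'cyc hd₁mem hd₂mem (by rw [hf₁, hf₂, h]))
        have hq₁q₂ : q₁ ≠ q₂ := by
          intro h
          exact hdne (cycle_darts_snd_inj hS'cyc hd₁mem hd₂mem (by rw [hs₁, hs₂, h]))
        have hp₁q₂ : p₁ ≠ q₂ := fun h => hq₂D (h ▸ hp₁D)
        have hq₁p₂ : q₁ ≠ p₂ := fun h => hq₁D (h.symm ▸ hp₂D)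
        have hadj₁ : (halfSquare B W).Adj p₁ q₁ := by rw [← hf₁, ← hs₁]; exact (dFn e₁).adj
        have hadj₂ : (halfSquare B W).Adj p₂ q₂ := by rw [← hf₂, ← hs₂]; exact (dFn e₂).adj
        have hd₁mk : (⟨(p₁, q₁), hadj₁⟩ : (halfSquare B W).Dart) ∈ S'.darts := by
          have hh : dFn e₁ = ⟨(p₁, q₁), hadj₁⟩ := by
            apply SimpleGraph.Dart.ext
            rw [Prod.ext_iff]
            exact ⟨hf₁, hs₁⟩
          rw [← hh]; exact hd₁mem
        have hd₂mk : (⟨(p₂, q₂), hadj₂⟩ : (halfSquare B W).Dart) ∈ S'.darts := by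
          have hh : dFn e₂ = ⟨(p₂, q₂), hadj₂⟩ := by
            apply SimpleGraph.Dart.ext
            rw [Prod.ext_iff]
            exact ⟨hf₂, hs₂⟩
          rw [← hh]; exact hd₂mem
        obtain ⟨C'', hcyc, hsupp, hmult⟩ := cycle_swap hS'cyc hadj₁ hadj₂ hd₁mk hd₂mk
          hp₁p₂ hq₁q₂ hp₁q₂ hq₁p₂ (hAdjN p₁ p₂ hp₁p₂ hp₁N hp₂N)
          (hAdjN q₁ q₂ hq₁q₂ hq₁N hq₂N)
        rw [← heq₁, ← heq₂] at hmult
        exact ⟨p₁, C'', hp₁p₂, hq₁q₂, hcyc, hsupp, hmult⟩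
      | false =>
        have hfst₁ : (dFn e₁).toProd.1 ∉ D := by
          intro hn
          rw [hdirdef] at hdir₁
          simp only [if_pos hn] at hdir₁
          exact Bool.noConfusion hdir₁
        have hfst₂ : (dFn e₂).toProd.1 ∉ D := by
          intro hn
          rw [hdirdef] at hdir₂
          simp only [if_pos hn] at hdir₂
          exact Bool.noConfusion hdir₂
        obtain ⟨hf₁, hs₁⟩ : (dFn e₁).toProd.1 = q₁ ∧ (dFn e₁).toProd.2 = p₁ := by
          rcases Sym2.eq_iff.mp hedge1 with ⟨h1, h2⟩ | h
          · exact absurd (h1.symm ▸ hp₁D) hfst₁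
          · exact h
        obtain ⟨hf₂, hs₂⟩ : (dFn e₂).toProd.1 = q₂ ∧ (dFn e₂).toProd.2 = p₂ := by
          rcases Sym2.eq_iff.mp hedge2 with ⟨h1, h2⟩ | h
          · exact absurd (h1.symm ▸ hp₂D) hfst₂
          · exact h
        have hq₁q₂ : q₁ ≠ q₂ := by
          intro h
          exact hdne (cycle_darts_fst_inj hS'cyc hd₁mem hd₂mem (by rw [hf₁, hf₂, h]))
        have hp₁p₂ : p₁ ≠ p₂ := by
          intro h
          exact hdne (cycle_darts_snd_inj hS'cyc hd₁mem hd₂mem (by rw [hs₁, hs₂, h]))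
        have hp₁q₂ : p₁ ≠ q₂ := fun h => hq₂D (h ▸ hp₁D)
        have hq₁p₂ : q₁ ≠ p₂ := fun h => hq₁D (h.symm ▸ hp₂D)
        have hadj₁ : (halfSquare B W).Adj q₁ p₁ := by rw [← hf₁, ← hs₁]; exact (dFn e₁).adj
        have hadj₂ : (halfSquare B W).Adj q₂ p₂ := by rw [← hf₂, ← hs₂]; exact (dFn e₂).adj
        have hd₁mk : (⟨(q₁, p₁), hadj₁⟩ : (halfSquare B W).Dart) ∈ S'.darts := by
          have hh : dFn e₁ = ⟨(q₁, p₁), hadj₁⟩ := by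
            apply SimpleGraph.Dart.ext
            rw [Prod.ext_iff]
            exact ⟨hf₁, hs₁⟩
          rw [← hh]; exact hd₁mem
        have hd₂mk : (⟨(q₂, p₂), hadj₂⟩ : (halfSquare B W).Dart) ∈ S'.darts := by
          have hh : dFn e₂ = ⟨(q₂, p₂), hadj₂⟩ := by
            apply SimpleGraph.Dart.ext
            rw [Prod.ext_iff]
            exact ⟨hf₂, hs₂⟩
          rw [← hh]; exact hd₂mem
        obtain ⟨C'', hcyc, hsupp, hmult⟩ := cycle_swap hS'cyc hadj₁ hadj₂ hd₁mk hd₂mk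
          hq₁q₂ hp₁p₂ hq₁p₂ hp₁q₂ (hAdjN q₁ q₂ hq₁q₂ hq₁N hq₂N)
          (hAdjN p₁ p₂ hp₁p₂ hp₁N hp₂N)
        rw [show s(q₁, p₁) = e₁ from Sym2.eq_swap.trans heq₁.symm,
          show s(q₂, p₂) = e₂ from Sym2.eq_swap.trans heq₂.symm,
          show ({s(q₁, q₂), s(p₁, p₂)} : Multiset (Sym2 V)) = {s(p₁, p₂), s(q₁, q₂)} from
            Multiset.pair_comm _ _] at hmult
        exact ⟨q₁, C'', hp₁p₂, hq₁q₂, hcyc, hsupp, hmult⟩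
    obtain ⟨v0, C'', hp₁p₂, hq₁q₂, hC''cyc, hC''supp, hC''mult⟩ := hmain
    have hAdjpp := hAdjN p₁ p₂ hp₁p₂ hp₁N hp₂N
    have hAdjqq := hAdjN q₁ q₂ hq₁q₂ hq₁N hq₂N
    have hppF : s(p₁, p₂) ∈ F := by
      rw [hFdef]
      refine Set.mem_biUnion (show j₀ ∈ {j : Fin ℓ | j ≤ i} from hj₀le) ?_
      refine ⟨(halfSquare B W).mem_edgeSet.mpr hAdjpp, ?_⟩
      intro x hx
      rw [hj₀eq]
      rcases Sym2.mem_iff.mp hx with rfl | rfl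
      · exact hp₁N
      · exact hp₂N
    have hqqF : s(q₁, q₂) ∈ F := by
      rw [hFdef]
      refine Set.mem_biUnion (show j₀ ∈ {j : Fin ℓ | j ≤ i} from hj₀le) ?_
      refine ⟨(halfSquare B W).mem_edgeSet.mpr hAdjqq, ?_⟩
      intro x hx
      rw [hj₀eq]
      rcases Sym2.mem_iff.mp hx with rfl | rfl
      · exact hq₁N
      · exact hq₂N
    -- the rerouted cycle is strictly shorter
    have hsum := congrArg (fun m : Multiset (Sym2 V) => (m.map len).sum) hC''mult
    simp only [Multiset.map_add, Multiset.sum_add, Multiset.insert_eq_cons,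
      Multiset.map_cons, Multiset.sum_cons, Multiset.map_singleton, Multiset.sum_singleton,
      Multiset.map_coe, Multiset.sum_coe] at hsum
    have hl₁ : len e₁ = ((posA p₁ : ℤ) - (posA q₁ : ℤ)).natAbs := by
      rw [heq₁]; exact hlenA p₁ q₁
    have hl₂ : len e₂ = ((posA p₂ : ℤ) - (posA q₂ : ℤ)).natAbs := by
      rw [heq₂]; exact hlenA p₂ q₂
    have hlpp : len s(p₁, p₂) = ((posA p₁ : ℤ) - (posA p₂ : ℤ)).natAbs := hlenA p₁ p₂
    have hlqq : len s(q₁, q₂) = ((posA q₁ : ℤ) - (posA q₂ : ℤ)).natAbs := hlenA q₁ q₂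
    have hμlt : ((C''.edges.map len).sum : ℕ) < Nat.find hPex := by
      rw [← hS'μ]
      omega
    refine Nat.find_min hPex hμlt ⟨v0, C'', hC''cyc,
      fun x => (hC''supp x).trans (hS'supp x), ?_, rfl⟩
    have hEF : {e | e ∈ C''.edges} \ F = {e | e ∈ S'.edges} \ F := by
      ext e
      simp only [Set.mem_diff, Set.mem_setOf_eq]
      constructor
      · rintro ⟨heC, heF⟩
        refine ⟨?_, heF⟩
        have hm : e ∈ (C''.edges : Multiset (Sym2 V)) + {e₁, e₂} :=
          Multiset.mem_add.mpr (Or.inl (Multiset.mem_coe.mpr heC))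
        rw [hC''mult] at hm
        rcases Multiset.mem_add.mp hm with hm | hm
        · exact Multiset.mem_coe.mp hm
        · exfalso
          simp only [Multiset.insert_eq_cons, Multiset.mem_cons, Multiset.mem_singleton] at hm
          rcases hm with rfl | rfl
          · exact heF hppF
          · exact heF hqqF
      · rintro ⟨heS, heF⟩
        refine ⟨?_, heF⟩
        have hm : e ∈ (S'.edges : Multiset (Sym2 V)) + {s(p₁, p₂), s(q₁, q₂)} :=
          Multiset.mem_add.mpr (Or.inl (Multiset.mem_coe.mpr heS))
        rw [← hC''mult] at hm
        rcases Multiset.mem_add.mp hm with hm | hm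
        · exact Multiset.mem_coe.mp hm
        · exfalso
          simp only [Multiset.insert_eq_cons, Multiset.mem_cons, Multiset.mem_singleton] at hm
          rcases hm with rfl | rfl
          · exact heF he₁F
          · exact heF he₂F
    exact hEF.trans hS'F
  -- combine the two sides
  by_contra hcon
  push_neg at hcon
  have hM : ∀ v : V, pos v ≤ Finset.univ.sup pos := fun v => Finset.le_sup (Finset.mem_univ v)
  set M := Finset.univ.sup pos with hMdef
  have h1 := inner pos hposinj (fun a b c => hposconv' t a b c) hlen
  have h2 := inner (fun v => M - pos v) ?_ ?_ ?_
  rotate_left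
  · intro u v huv
    simp only at huv
    have hu := hM u
    have hv := hM v
    exact hposinj (by omega)
  · intro a b c ha hc hab hbc
    have h3 := hM a
    have h4 := hM b
    have h5 := hM c
    exact hposconv' t c b a hc ha (by omega) (by omega)
  · intro x y
    rw [hlen x y]
    have h3 := hM x
    have h4 := hM y
    omega
  have hcover : CntF ⊆
      (CntF.filter (fun e => ∃ p q, e = s(p, q) ∧ p ∈ D ∧ q ∉ D ∧ pos q < pos p))
      ∪ (CntF.filter (fun e => ∃ p q, e = s(p, q) ∧ p ∈ D ∧ q ∉ D ∧
          M - pos q < M - pos p)) := by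
    intro e he
    obtain ⟨p, q, heq, hpD, hqD, hqW, hqγ⟩ := hstruct e (hCntfin.mem_toFinset.mp he)
    have hpq : p ≠ q := fun h => hqD (h ▸ hpD)
    have hppq : pos p ≠ pos q := fun h => hpq (hposinj h)
    rcases Nat.lt_or_ge (pos q) (pos p) with h | h
    · exact Finset.mem_union_left _ (Finset.mem_filter.mpr ⟨he, p, q, heq, hpD, hqD, h⟩)
    · refine Finset.mem_union_right _ (Finset.mem_filter.mpr ⟨he, p, q, heq, hpD, hqD, ?_⟩)
      have h3 := hM p
      have h4 := hM q
      omega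
  have hfin := (Finset.card_le_card hcover).trans (Finset.card_union_le _ _)
  rw [hCntcard] at hcon
  rw [htcard] at hcon
  omega
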